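/- arXiv:1708.05188 — 4 statements merged into one kernel-verified Lean document; each statement's English description precedes it below -/
import Mathlib

section
/- The number of cyclic shifts of interval partitions of {1,...,n} is 2^n − n. -/
/-- A partition of `{1,...,n}` (modeled as a setoid on `Fin n`) is non-crossing. -/
def IsNoncrossing {n : ℕ} (s : Setoid (Fin n)) : Prop :=
  ∀ a b c d : Fin n, a < b → b < c → c < d → s.r a c → s.r b d → s.r a b

/-- `NC n`: the set of non-crossing partitions of `{1,...,n}`, ordered by reverse
refinement (the order induced from the refinement order on setoids). -/
abbrev NC (n : ℕ) := {s : Setoid (Fin n) // IsNoncrossing s}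

/-- The number of blocks of a partition. -/
noncomputable def blocks {n : ℕ} (s : Setoid (Fin n)) : ℕ := Nat.card (Quotient s)

/-- The Hasse diagram of `NC n`: vertices are non-crossing partitions, edges join
pairs where one covers the other. -/
def hasse (n : ℕ) : SimpleGraph (NC n) where
  Adj x y := x ⋖ y ∨ y ⋖ x
  symm := ⟨fun _ _ h => h.symm⟩
  loopless := ⟨fun x h => lt_irrefl x (h.elim CovBy.lt CovBy.lt)⟩

/-- An interval partition: every block is an interval of consecutive elements. -/
def IsIntervalPartition {n : ℕ} (s : Setoid (Fin n)) : Prop :=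
  ∀ a b c : Fin n, a ≤ b → b ≤ c → s.r a c → s.r a b

/-- A cyclic shift of an interval partition: for some shift `k`, pulling the
partition back along `i ↦ i + k` yields an interval partition. -/
def IsCyclicIntervalPartition {n : ℕ} (s : Setoid (Fin n)) : Prop :=
  ∃ k : Fin n, IsIntervalPartition (Setoid.comap (fun i => i + k) s)

open Finset
open Fin.NatCast
open Fin.CommRing

namespace CIP

variable {n : ℕ}

/-- distance from `i` to the nearest element of `A` going forward (cyclically). -/
noncomputable def dist [NeZero n] (A : Finset (Fin n)) (i : Fin n) : ℕ :=
  sInf {m : ℕ | i + (m : Fin n) ∈ A}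

lemma add_cast [NeZero n] (i : Fin n) (m : ℕ) :
    i + (m : Fin n) = ((i.val + m : ℕ) : Fin n) := by
  simp [Nat.cast_add, Fin.cast_val_eq_self]

lemma cast_inj [NeZero n] {x y : ℕ} (hx : x < n) (hy : y < n) (h : (x : Fin n) = y) : x = y := by
  have := congrArg Fin.val h
  rwa [Fin.val_cast_of_lt hx, Fin.val_cast_of_lt hy] at this

lemma dist_spec [NeZero n] {A : Finset (Fin n)} (hA : A.Nonempty) (i : Fin n) :
    i + ((dist A i : ℕ) : Fin n) ∈ A := by
  obtain ⟨a, ha⟩ := hA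
  apply Nat.sInf_mem (s := {m : ℕ | i + (m : Fin n) ∈ A})
  exact ⟨(a - i).val, by simpa [Fin.cast_val_eq_self] using (by ring_nf; simpa using ha : i + (a - i) ∈ A)⟩

lemma dist_le [NeZero n] {A : Finset (Fin n)} {i : Fin n} {m : ℕ}
    (h : i + (m : Fin n) ∈ A) : dist A i ≤ m := Nat.sInf_le h

lemma dist_min [NeZero n] {A : Finset (Fin n)} {i : Fin n} {m : ℕ}
    (h : m < dist A i) : i + (m : Fin n) ∉ A := Nat.notMem_of_lt_sInf h

lemma dist_lt [NeZero n] {A : Finset (Fin n)} (hA : A.Nonempty) (i : Fin n) :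
    dist A i < n := by
  obtain ⟨a, ha⟩ := hA
  have : dist A i ≤ (a - i).val := dist_le (by simpa [Fin.cast_val_eq_self] using (by ring_nf; simpa using ha : i + (a - i) ∈ A))
  exact lt_of_le_of_lt this (a - i).isLt

noncomputable def cfun [NeZero n] (A : Finset (Fin n)) (i : Fin n) : Fin n :=
  i + ((dist A i : ℕ) : Fin n)

open Classical in
noncomputable def relA [NeZero n] (A : Finset (Fin n)) : Setoid (Fin n) :=
  if A.Nonempty then Setoid.ker (cfun A) else ⊤

open Classical in
noncomputable def cuts [NeZero n] (s : Setoid (Fin n)) : Finset (Fin n) :=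
  univ.filter fun i => ¬ s.r i (i + 1)

lemma mem_cuts [NeZero n] {s : Setoid (Fin n)} {i : Fin n} : i ∈ cuts s ↔ ¬ s.r i (i + 1) := by
  classical simp [cuts]

lemma chain [NeZero n] (s : Setoid (Fin n)) (i : Fin n) (m : ℕ)
    (h : ∀ l < m, s.r (i + (l : Fin n)) (i + (l : Fin n) + 1)) :
    s.r i (i + (m : Fin n)) := by
  induction m with
  | zero => simpa using s.refl i
  | succ m ih =>
    have h1 := ih (fun l hl => h l (by omega))
    have h2 := h m (by omega)
    have e : i + ((m : ℕ) : Fin n) + 1 = i + (((m + 1 : ℕ) : ℕ) : Fin n) := by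
      push_cast; ring
    exact e ▸ s.trans h1 h2

lemma eq_top_of_cuts_empty [NeZero n] {s : Setoid (Fin n)} (h : cuts s = ∅) : s = ⊤ := by
  ext a b
  refine ⟨fun _ => trivial, fun _ => ?_⟩
  have hb : b = a + (((b - a).val : ℕ) : Fin n) := by
    rw [Fin.cast_val_eq_self]; ring
  rw [hb]
  apply chain
  intro l _
  by_contra hc
  have : (a + (l : Fin n)) ∈ cuts s := mem_cuts.2 hc
  simp [h] at this

lemma card_cuts_ne_one [NeZero n] (s : Setoid (Fin n)) : (cuts s).card ≠ 1 := by
  intro h1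
  obtain ⟨c, hc⟩ := Finset.card_eq_one.1 h1
  have hcut : ¬ s.r c (c + 1) := mem_cuts.1 (hc ▸ Finset.mem_singleton_self c)
  have hch : s.r (c + 1) ((c + 1) + (((n - 1 : ℕ)) : Fin n)) := by
    apply chain
    intro l hl
    by_contra hcon
    have hm : (c + 1 + (l : Fin n)) ∈ cuts s := mem_cuts.2 hcon
    rw [hc, Finset.mem_singleton] at hm
    -- c + 1 + l = c → (1 + l : Fin n) = 0 → n ∣ 1 + l, but 1 ≤ 1 + l ≤ n - 1
    have : ((1 + l : ℕ) : Fin n) = 0 := by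
      have := hm
      push_cast at this ⊢
      linear_combination this - c
    have hd : (n : ℕ) ∣ 1 + l := (Fin.natCast_eq_zero).1 this
    have hn1 : 1 ≤ n := Nat.one_le_iff_ne_zero.2 (NeZero.ne n)
    have := Nat.le_of_dvd (by omega) hd
    omega
  have hn1 : 1 ≤ n := Nat.one_le_iff_ne_zero.2 (NeZero.ne n)
  have he : (c + 1) + (((n - 1 : ℕ)) : Fin n) = c := by
    have : ((n - 1 : ℕ) : Fin n) = (n : Fin n) - 1 := by
      push_cast [Nat.cast_sub hn1]; ring
    rw [this]
    simp [Fin.natCast_self]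
  rw [he] at hch
  exact hcut (s.symm hch)

/-- key monotonicity: if `b` lies between `a` and its nearest cut (in shifted linear
coordinates), then `a` and `b` have the same nearest cut. -/
lemma g_eq [NeZero n] {A : Finset (Fin n)} (hA : A.Nonempty) {k a b : Fin n}
    (hab : a.val ≤ b.val) (hb : b.val ≤ a.val + dist A (a + k)) :
    b.val + dist A (b + k) = a.val + dist A (a + k) := by
  set da := dist A (a + k) with hda
  have mem : (a + k) + ((da : ℕ) : Fin n) ∈ A := dist_spec hA _
  have key : (a + k) + ((da : ℕ) : Fin n) = (b + k) + (((a.val + da - b.val : ℕ)) : Fin n) := by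
    rw [add_right_comm a k, add_right_comm b k, add_cast a, add_cast b]
    have : a.val + da = b.val + (a.val + da - b.val) := by omega
    conv_lhs => rw [this]
  have h1 : dist A (b + k) ≤ a.val + da - b.val := dist_le (key ▸ mem)
  have h2 : a.val + da ≤ b.val + dist A (b + k) := by
    by_contra hcon
    push_neg at hcon
    set e := dist A (b + k) with he
    have hge : a.val ≤ b.val + e := le_trans hab (Nat.le_add_right _ _)
    have meme : (b + k) + ((e : ℕ) : Fin n) ∈ A := dist_spec hA _
    have key2 : (b + k) + ((e : ℕ) : Fin n) = (a + k) + (((b.val + e - a.val : ℕ)) : Fin n) := by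
      rw [add_right_comm b k, add_right_comm a k, add_cast b, add_cast a]
      have : b.val + e = a.val + (b.val + e - a.val) := by omega
      conv_lhs => rw [this]
    exact dist_min (by omega : b.val + e - a.val < da) (key2 ▸ meme)
  omega


lemma relA_eq_ker [NeZero n] {A : Finset (Fin n)} (hA : A.Nonempty) :
    relA A = Setoid.ker (cfun A) := by
  rw [relA, if_pos hA]

lemma relA_eq_top [NeZero n] {A : Finset (Fin n)} (hA : A = ∅) :
    relA A = ⊤ := by
  rw [relA, if_neg (by simp [hA])]

lemma n_pos [NeZero n] : 1 ≤ n := Nat.one_le_iff_ne_zero.2 (NeZero.ne n)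

lemma last_add_one [NeZero n] : ((n - 1 : ℕ) : Fin n) + 1 = 0 := by
  have hn1 : 1 ≤ n := n_pos
  rw [Nat.cast_sub hn1]
  push_cast
  simp [Fin.natCast_self]

lemma cfun_nat [NeZero n] (A : Finset (Fin n)) (x k : Fin n) :
    cfun A (x + k) = ((x.val + dist A (x + k) : ℕ) : Fin n) + k := by
  rw [cfun, add_right_comm, add_cast]

lemma relA_cic [NeZero n] (A : Finset (Fin n)) : IsCyclicIntervalPartition (relA A) := by
  rcases A.eq_empty_or_nonempty with h | hA
  · refine ⟨0, fun a b c _ _ _ => ?_⟩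
    rw [relA_eq_top h]
    exact trivial
  · obtain ⟨a0, ha0⟩ := hA
    have hA : A.Nonempty := ⟨a0, ha0⟩
    refine ⟨a0 + 1, ?_⟩
    set k := a0 + 1 with hk
    have hlast : ((n - 1 : ℕ) : Fin n) + k ∈ A := by
      have he : ((n - 1 : ℕ) : Fin n) + k = a0 := by
        rw [hk]
        linear_combination (last_add_one (n := n))
      rw [he]; exact ha0
    have hbd : ∀ x : Fin n, x.val + dist A (x + k) ≤ n - 1 := by
      intro x
      have hx := x.isLt
      have he : (x + k) + ((n - 1 - x.val : ℕ) : Fin n) = ((n - 1 : ℕ) : Fin n) + k := by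
        rw [add_right_comm, add_cast]
        have : x.val + (n - 1 - x.val) = n - 1 := by omega
        rw [this]
      have := dist_le (he ▸ hlast)
      omega
    intro a b c hab hbc hac
    rw [relA_eq_ker hA] at hac ⊢
    have hac' : cfun A (a + k) = cfun A (c + k) := hac
    rw [cfun_nat, cfun_nat] at hac'
    have h2 := add_right_cancel hac'
    have h1 : a.val + dist A (a + k) = c.val + dist A (c + k) :=
      cast_inj (by have := hbd a; omega) (by have := hbd c; omega) h2
    have hb2 : b.val ≤ a.val + dist A (a + k) := by
      have := Fin.le_def.mp hbc
      omega
    have h3 := g_eq (k := k) hA (Fin.le_def.mp hab) hb2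
    show cfun A (a + k) = cfun A (b + k)
    rw [cfun_nat, cfun_nat, h3]

lemma shift_eq [NeZero n] (i : Fin n) (m : ℕ) :
    (i + 1) + ((m : ℕ) : Fin n) = i + (((m + 1 : ℕ)) : Fin n) := by
  push_cast
  ring

lemma dist_succ [NeZero n] {A : Finset (Fin n)} (hA : A.Nonempty) {i : Fin n} (hi : i ∉ A) :
    dist A i = dist A (i + 1) + 1 := by
  have hmem := dist_spec hA i
  have hd1 : 1 ≤ dist A i := by
    rcases Nat.eq_zero_or_pos (dist A i) with h | h
    · rw [h] at hmem
      simp at hmem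
      exact absurd hmem hi
    · exact h
  have hmem' : (i + 1) + ((dist A i - 1 : ℕ) : Fin n) ∈ A := by
    rw [shift_eq]
    have : dist A i - 1 + 1 = dist A i := by omega
    rw [this]
    exact hmem
  have h1 : dist A (i + 1) ≤ dist A i - 1 := dist_le hmem'
  have hmem2 : i + ((dist A (i + 1) + 1 : ℕ) : Fin n) ∈ A := by
    rw [← shift_eq]
    exact dist_spec hA (i + 1)
  have h2 : dist A i ≤ dist A (i + 1) + 1 := dist_le hmem2
  omega

lemma cuts_top [NeZero n] : cuts (⊤ : Setoid (Fin n)) = ∅ := by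
  ext i
  simp only [Finset.notMem_empty, iff_false, mem_cuts, not_not]
  exact trivial

lemma cuts_relA [NeZero n] {A : Finset (Fin n)} (hA : A.card ≠ 1) : cuts (relA A) = A := by
  rcases A.eq_empty_or_nonempty with h | hne
  · rw [relA_eq_top h, cuts_top, h]
  · have h2 : 2 ≤ A.card := by
      have := hne.card_pos; omega
    have hn2 : 2 ≤ n := by
      have := Finset.card_le_card (Finset.subset_univ A)
      simp only [Finset.card_univ, Fintype.card_fin] at this
      omega
    rw [relA_eq_ker hne]
    ext i
    rw [mem_cuts]
    have hker : (Setoid.ker (cfun A)).r i (i + 1) ↔ cfun A i = cfun A (i + 1) := Setoid.ker_def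
    rw [hker]
    constructor
    · intro hne2
      by_contra hi
      exact hne2 (by rw [cfun, cfun, dist_succ hne hi, ← shift_eq])
    · intro hi hEq
      have hd0 : dist A i = 0 := Nat.sInf_eq_zero.2 (Or.inl (by simpa using hi))
      rw [cfun, cfun, hd0] at hEq
      simp only [Nat.cast_zero, add_zero] at hEq
      have hz : ((dist A (i + 1) + 1 : ℕ) : Fin n) = 0 := by
        push_cast
        linear_combination -hEq
      have hdvd : (n : ℕ) ∣ dist A (i + 1) + 1 := Fin.natCast_eq_zero.1 hz
      obtain ⟨a', ha', hne'⟩ := Finset.exists_mem_ne (show 1 < A.card by omega) i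
      have hlt : dist A (i + 1) ≤ (a' - (i + 1)).val := dist_le (by
        rw [Fin.cast_val_eq_self]
        have : (i + 1) + (a' - (i + 1)) = a' := by ring
        rw [this]
        exact ha')
      have hne3 : a' - (i + 1) ≠ ((n - 1 : ℕ) : Fin n) := by
        intro hcon
        apply hne'
        have h4 : a' = (i + 1) + ((n - 1 : ℕ) : Fin n) := by linear_combination hcon
        rw [h4]
        linear_combination last_add_one (n := n)
      have h5 : (a' - (i + 1)).val ≠ n - 1 := by
        intro hcon
        exact hne3 (Fin.ext (by rw [hcon, Fin.val_cast_of_lt (by omega)]))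
      have h6 := (a' - (i + 1)).isLt
      have h7 := Nat.le_of_dvd (by omega) hdvd
      omega

lemma rel_cfun [NeZero n] {s : Setoid (Fin n)} (hne : (cuts s).Nonempty) (x : Fin n) :
    s.r x (cfun (cuts s) x) := by
  rw [cfun]
  apply chain
  intro l hl
  have hnc := dist_min (A := cuts s) (i := x) hl
  by_contra hcon
  exact hnc (mem_cuts.2 hcon)

lemma relA_cuts [NeZero n] {s : Setoid (Fin n)} (hs : IsCyclicIntervalPartition s) :
    relA (cuts s) = s := by
  rcases (cuts s).eq_empty_or_nonempty with h | hne
  · rw [relA_eq_top h, eq_top_of_cuts_empty h]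
  · rw [relA_eq_ker hne]
    obtain ⟨k, hk⟩ := hs
    set s' := Setoid.comap (fun i => i + k) s with hs'
    have hs'r : ∀ x y : Fin n, s'.r x y ↔ s.r (x + k) (y + k) := fun x y => Iff.rfl
    have hmemk : ∀ x : Fin n, x + k ∈ cuts s ↔ ¬ s'.r x (x + 1) := by
      intro x
      rw [mem_cuts, hs'r, add_right_comm]
    have hlastcut : ((n - 1 : ℕ) : Fin n) + k ∈ cuts s := by
      rw [hmemk]
      intro hrel
      rw [last_add_one] at hrel
      have hall : ∀ b : Fin n, s'.r 0 b := by
        intro b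
        refine hk 0 b ((n - 1 : ℕ) : Fin n) (by simp [Fin.le_def]) ?_ (s'.symm hrel)
        rw [Fin.le_def, Fin.val_cast_of_lt (by have := n_pos (n := n); omega)]
        have := b.isLt
        omega
      obtain ⟨c, hc⟩ := hne
      apply mem_cuts.1 hc
      have e1 : (c - k) + k = c := by ring
      have e2 : ((c + 1) - k) + k = c + 1 := by ring
      have r1 := hall (c - k)
      have r2 := hall ((c + 1) - k)
      have h9 : s'.r (c - k) ((c + 1) - k) := s'.trans (s'.symm r1) r2
      rw [hs'r, e1, e2] at h9
      exact h9
    have main : ∀ a c : Fin n, a.val ≤ c.val → s'.r a c →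
        cfun (cuts s) (a + k) = cfun (cuts s) (c + k) := by
      intro a c hac hrel
      have hdge : c.val ≤ a.val + dist (cuts s) (a + k) := by
        by_contra hcon
        push_neg at hcon
        set d := dist (cuts s) (a + k) with hd
        have hmem := dist_spec (A := cuts s) hne (a + k)
        have hc := c.isLt
        have hvd : (a + ((d : ℕ) : Fin n)).val = a.val + d := by
          rw [add_cast, Fin.val_cast_of_lt (by omega)]
        have hvd1 : (a + (((d + 1 : ℕ)) : Fin n)).val = a.val + d + 1 := by
          rw [add_cast, Fin.val_cast_of_lt (by omega)]
          omega
        have r1 : s'.r a (a + ((d : ℕ) : Fin n)) :=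
          hk a (a + ((d : ℕ) : Fin n)) c
            (by rw [Fin.le_def, hvd]; omega) (by rw [Fin.le_def, hvd]; omega) hrel
        have r2 : s'.r a (a + (((d + 1 : ℕ)) : Fin n)) :=
          hk a (a + (((d + 1 : ℕ)) : Fin n)) c
            (by rw [Fin.le_def, hvd1]; omega) (by rw [Fin.le_def, hvd1]; omega) hrel
        have r3 : s'.r (a + ((d : ℕ) : Fin n)) ((a + ((d : ℕ) : Fin n)) + 1) := by
          have e3 : (a + ((d : ℕ) : Fin n)) + 1 = a + (((d + 1 : ℕ)) : Fin n) := by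
            push_cast; ring
          rw [e3]
          exact s'.trans (s'.symm r1) r2
        have hnotin : (a + ((d : ℕ) : Fin n)) + k ∉ cuts s := by
          rw [hmemk]
          exact not_not.2 r3
        rw [add_right_comm] at hnotin
        exact hnotin hmem
      have h3 := g_eq (k := k) hne hac hdge
      rw [cfun_nat, cfun_nat, h3]
    apply Setoid.ext
    intro i j
    have hkd : (Setoid.ker (cfun (cuts s))).r i j ↔ cfun (cuts s) i = cfun (cuts s) j :=
      Setoid.ker_def
    rw [hkd]
    constructor
    · intro hEq
      exact s.trans (rel_cfun hne i) (hEq ▸ s.symm (rel_cfun hne j))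
    · intro hr
      have e1 : (i - k) + k = i := by ring
      have e2 : (j - k) + k = j := by ring
      have hrel : s'.r (i - k) (j - k) := by
        rw [hs'r, e1, e2]
        exact hr
      rcases le_total (i - k).val (j - k).val with hle | hle
      · have := main (i - k) (j - k) hle hrel
        rwa [e1, e2] at this
      · have := main (j - k) (i - k) hle (s'.symm hrel)
        rw [e1, e2] at this
        exact this.symm

end CIP

/-- The number of cyclic shifts of interval partitions of `{1,...,n}` is `2^n - n`. -/
theorem card_cyclicInterval_partitions (n : ℕ) (hn : 1 ≤ n) :
    Nat.card {s : Setoid (Fin n) // IsCyclicIntervalPartition s} = 2 ^ n - n := by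
  haveI : NeZero n := ⟨by omega⟩
  classical
  have e : {s : Setoid (Fin n) // IsCyclicIntervalPartition s} ≃
      {A : Finset (Fin n) // A.card ≠ 1} :=
    { toFun := fun s => ⟨CIP.cuts s.1, CIP.card_cuts_ne_one s.1⟩
      invFun := fun A => ⟨CIP.relA A.1, CIP.relA_cic A.1⟩
      left_inv := fun s => Subtype.ext (CIP.relA_cuts s.2)
      right_inv := fun A => Subtype.ext (CIP.cuts_relA A.2) }
  rw [Nat.card_congr e, Nat.card_eq_fintype_card, Fintype.card_subtype]
  have h1 : (univ.filter fun A : Finset (Fin n) => A.card = 1) =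
      univ.image (fun i : Fin n => ({i} : Finset (Fin n))) := by
    ext A
    simp [Finset.card_eq_one, eq_comm]
  have h2 : (univ.filter fun A : Finset (Fin n) => A.card = 1).card = n := by
    rw [h1, Finset.card_image_of_injective _ Finset.singleton_injective]
    simp
  have h3 := Finset.card_filter_add_card_filter_not
    (s := (univ : Finset (Finset (Fin n)))) (p := fun A : Finset (Fin n) => A.card = 1)
  have h4 : (univ : Finset (Finset (Fin n))).card = 2 ^ n := by
    simp [Finset.card_univ]
  have h5 : (univ.filter fun A : Finset (Fin n) => A.card ≠ 1) =
      (univ.filter fun A : Finset (Fin n) => ¬ A.card = 1) := rfl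
  rw [h5]
  omega
end

section
/- Let F(z,t) be a formal power series in z and t satisfying the functional equation F(z,t) = t·G(z·(1 + F(z,t))) for some formal power series G(z) with G(0)=0. Then the partial derivatives satisfy F_t(z,1) = F(z,1) + z·F_z(z,1) − z·F_z(z,1)/(1 + F(z,1)). -/
/-- The partial derivative `F_t` of a formal power series in `z` whose coefficients
are polynomials in `t` (differentiating coefficientwise in `t`). -/
noncomputable def dT (F : PowerSeries (Polynomial ℚ)) : PowerSeries (Polynomial ℚ) :=
  PowerSeries.mk fun k => Polynomial.derivative (PowerSeries.coeff k F)

/-- Evaluation of a power series in `z` with polynomial-in-`t` coefficients at `t = 1`. -/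
noncomputable def evalT1 (F : PowerSeries (Polynomial ℚ)) : PowerSeries ℚ :=
  PowerSeries.map (Polynomial.evalRingHom 1) F

/-- The derivative `f_z` of a formal power series in `z`. -/
noncomputable def dZ (f : PowerSeries ℚ) : PowerSeries ℚ :=
  PowerSeries.mk fun k => (k + 1 : ℚ) * PowerSeries.coeff (k + 1) f

/-- The composition `G(u) = Σ_m g m · u^m` for `G(z) = Σ_{m ≥ 1} (g m) z^m` a power
series with zero constant term and `u` a power series with zero constant term. -/
noncomputable def compG (g : ℕ → ℚ) (u : PowerSeries (Polynomial ℚ)) :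
    PowerSeries (Polynomial ℚ) :=
  PowerSeries.mk fun k => ∑ m ∈ Finset.range (k + 1),
    Polynomial.C (g m) * PowerSeries.coeff k (u ^ m)

open PowerSeries Finset

namespace SGaux

abbrev R := Polynomial ℚ

noncomputable def dZp (s : PowerSeries R) : PowerSeries R := PowerSeries.derivativeFun s

lemma coeff_dZp (s : PowerSeries R) (k : ℕ) :
    coeff k (dZp s) = coeff (k + 1) s * ((k : R) + 1) := by
  exact coeff_derivativeFun s k

lemma dZp_mul (a b : PowerSeries R) : dZp (a * b) = dZp a * b + a * dZp b := by
  show derivativeFun (a * b) = _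
  rw [derivativeFun_mul, smul_eq_mul, smul_eq_mul]
  unfold dZp
  ring

lemma dZp_add (a b : PowerSeries R) : dZp (a + b) = dZp a + dZp b := derivativeFun_add a b

lemma dZp_one : dZp (1 : PowerSeries R) = 0 := derivativeFun_one

lemma dZp_X : dZp (X : PowerSeries R) = 1 := by
  ext k
  rw [coeff_dZp, coeff_X, coeff_one]
  rcases k with _ | k <;> simp

lemma dZp_C (p : R) : dZp (C p) = 0 := derivativeFun_C

lemma coeff_dT (s : PowerSeries R) (k : ℕ) :
    coeff k (dT s) = Polynomial.derivative (coeff k s) := coeff_mk k _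

lemma dT_mul (a b : PowerSeries R) : dT (a * b) = dT a * b + a * dT b := by
  ext k
  simp only [coeff_dT, map_add, coeff_mul, map_sum, Polynomial.derivative_mul, coeff_dT,
    Finset.sum_add_distrib]

lemma dT_add (a b : PowerSeries R) : dT (a + b) = dT a + dT b := by
  ext k; simp [coeff_dT]

lemma dT_one : dT (1 : PowerSeries R) = 0 := by
  ext k
  simp only [coeff_dT, map_zero]
  rcases k with _ | k <;> simp

lemma dT_X : dT (X : PowerSeries R) = 0 := by
  ext k
  simp only [coeff_dT, coeff_X, map_zero]
  split <;> simp

lemma dT_T : dT (C Polynomial.X) = 1 := by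
  ext k
  rcases k with _ | k <;> simp [coeff_dT, coeff_succ_C]

lemma coeff_pow_zero {u : PowerSeries R} (hu : constantCoeff u = 0)
    {i m : ℕ} (h : i < m) : coeff i (u ^ m) = 0 := by
  have hx : (X : PowerSeries R) ^ m ∣ u ^ m :=
    pow_dvd_pow_of_dvd (X_dvd_iff.mpr hu) m
  exact X_pow_dvd_iff.mp hx i h

lemma pow_cross (u : PowerSeries R) (m : ℕ) :
    dT (u ^ m) * dZp u = dZp (u ^ m) * dT u := by
  induction m with
  | zero => simp [pow_zero, dT_one, dZp_one]
  | succ m ih =>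
      rw [pow_succ, dT_mul, dZp_mul]
      linear_combination u * ih

lemma coeff_dT_compG (g : ℕ → ℚ) {u : PowerSeries R} (hu : constantCoeff u = 0)
    (k i : ℕ) (hik : i ≤ k) :
    coeff i (dT (compG g u)) =
      ∑ m ∈ Finset.range (k + 2), Polynomial.C (g m) * coeff i (dT (u ^ m)) := by
  rw [coeff_dT, compG, coeff_mk, map_sum]
  have h1 : ∀ m : ℕ, Polynomial.derivative (Polynomial.C (g m) * coeff i (u ^ m)) =
      Polynomial.C (g m) * coeff i (dT (u ^ m)) := by
    intro m; rw [coeff_dT, Polynomial.derivative_mul, Polynomial.derivative_C, zero_mul, zero_add]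
  simp only [h1]
  apply Finset.sum_subset
  · exact Finset.range_subset_range.mpr (by omega)
  · intro m hm hm'
    have him : i < m := by simp only [Finset.mem_range] at hm hm'; omega
    rw [coeff_dT, coeff_pow_zero hu him, map_zero, mul_zero]

lemma coeff_dZ_compG (g : ℕ → ℚ) {u : PowerSeries R} (hu : constantCoeff u = 0)
    (k i : ℕ) (hik : i ≤ k) :
    coeff i (dZp (compG g u)) =
      ∑ m ∈ Finset.range (k + 2), Polynomial.C (g m) * coeff i (dZp (u ^ m)) := by
  rw [coeff_dZp, compG, coeff_mk, Finset.sum_mul]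
  have h1 : ∀ m : ℕ, Polynomial.C (g m) * coeff i (dZp (u ^ m)) =
      Polynomial.C (g m) * coeff (i + 1) (u ^ m) * ((i : R) + 1) := by
    intro m; rw [coeff_dZp]; ring
  simp only [h1]
  apply Finset.sum_subset
  · exact Finset.range_subset_range.mpr (by omega)
  · intro m hm hm'
    have him : i + 1 < m := by simp only [Finset.mem_range] at hm hm'; omega
    rw [coeff_pow_zero hu him, mul_zero, zero_mul]

lemma cross_compG (g : ℕ → ℚ) {u : PowerSeries R} (hu : constantCoeff u = 0) :
    dT (compG g u) * dZp u = dZp (compG g u) * dT u := by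
  refine PowerSeries.ext fun k => ?_
  rw [coeff_mul, coeff_mul]
  calc ∑ p ∈ antidiagonal k, coeff p.1 (dT (compG g u)) * coeff p.2 (dZp u)
      = ∑ p ∈ antidiagonal k, ∑ m ∈ Finset.range (k + 2),
          Polynomial.C (g m) * (coeff p.1 (dT (u ^ m)) * coeff p.2 (dZp u)) := by
        refine Finset.sum_congr rfl fun p hp => ?_
        have hp1 : p.1 ≤ k := by
          have := Finset.HasAntidiagonal.mem_antidiagonal.mp hp; omega
        rw [coeff_dT_compG g hu k p.1 hp1, Finset.sum_mul]
        simp [mul_assoc]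
    _ = ∑ m ∈ Finset.range (k + 2), Polynomial.C (g m) * coeff k (dT (u ^ m) * dZp u) := by
        rw [Finset.sum_comm]
        refine Finset.sum_congr rfl fun m _ => ?_
        rw [coeff_mul, Finset.mul_sum]
    _ = ∑ m ∈ Finset.range (k + 2), Polynomial.C (g m) * coeff k (dZp (u ^ m) * dT u) := by
        simp [pow_cross]
    _ = ∑ p ∈ antidiagonal k, ∑ m ∈ Finset.range (k + 2),
          Polynomial.C (g m) * (coeff p.1 (dZp (u ^ m)) * coeff p.2 (dT u)) := by
        rw [Finset.sum_comm]
        refine Finset.sum_congr rfl fun m _ => ?_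
        rw [coeff_mul, Finset.mul_sum]
    _ = ∑ p ∈ antidiagonal k, coeff p.1 (dZp (compG g u)) * coeff p.2 (dT u) := by
        refine Finset.sum_congr rfl fun p hp => ?_
        have hp1 : p.1 ≤ k := by
          have := Finset.HasAntidiagonal.mem_antidiagonal.mp hp; omega
        rw [coeff_dZ_compG g hu k p.1 hp1, Finset.sum_mul]
        simp [mul_assoc]

end SGaux

/-- If `F(z,t)` (with zero constant term in `z`) satisfies the functional equation
`F(z,t) = t · G(z (1 + F(z,t)))` for a power series `G` with `G(0) = 0`, then
`F_t(z,1) = F(z,1) + z F_z(z,1) - z F_z(z,1) / (1 + F(z,1))`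
(stated after multiplying through by the unit `1 + F(z,1)`). -/
theorem semigroup_derivative (F : PowerSeries (Polynomial ℚ)) (g : ℕ → ℚ)
    (hF0 : PowerSeries.constantCoeff F = 0) (hg0 : g 0 = 0)
    (heq : F = PowerSeries.C Polynomial.X * compG g (PowerSeries.X * (1 + F))) :
    evalT1 (dT F) * (1 + evalT1 F) =
      (evalT1 F + PowerSeries.X * dZ (evalT1 F)) * (1 + evalT1 F)
        - PowerSeries.X * dZ (evalT1 F) := by
  classical
  set u : PowerSeries (Polynomial ℚ) := PowerSeries.X * (1 + F) with hu_def
  have hu : PowerSeries.constantCoeff u = 0 := by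
    rw [hu_def, map_mul, constantCoeff_X, zero_mul]
  set Cg := compG g u with hCg
  set T : PowerSeries (Polynomial ℚ) := PowerSeries.C Polynomial.X with hT
  have hdTF : dT F = Cg + T * dT Cg := by
    conv_lhs => rw [heq]
    rw [SGaux.dT_mul, SGaux.dT_T, one_mul]
  have hdZF : SGaux.dZp F = T * SGaux.dZp Cg := by
    conv_lhs => rw [heq]
    rw [SGaux.dZp_mul, hT, SGaux.dZp_C, zero_mul, zero_add]
  have hdTu : dT u = PowerSeries.X * dT F := by
    rw [hu_def, SGaux.dT_mul, SGaux.dT_X, SGaux.dT_add, SGaux.dT_one, zero_mul, zero_add,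
      zero_add]
  have hdZu : SGaux.dZp u = (1 + F) + PowerSeries.X * SGaux.dZp F := by
    rw [hu_def, SGaux.dZp_mul, SGaux.dZp_X, one_mul, SGaux.dZp_add, SGaux.dZp_one, zero_add]
  have hcross := SGaux.cross_compG g hu
  have key : (dT F - Cg) * ((1 + F) + PowerSeries.X * SGaux.dZp F)
      = SGaux.dZp F * (PowerSeries.X * dT F) := by
    calc (dT F - Cg) * ((1 + F) + PowerSeries.X * SGaux.dZp F)
        = T * (dT Cg * SGaux.dZp u) := by rw [hdTF, hdZu]; ring
      _ = T * (SGaux.dZp Cg * dT u) := by rw [hcross]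
      _ = SGaux.dZp F * (PowerSeries.X * dT F) := by rw [hdZF, hdTu]; ring
  -- now evaluate at t = 1
  set φ := Polynomial.evalRingHom (1 : ℚ) with hφ
  have eDZ : ∀ s : PowerSeries (Polynomial ℚ),
      PowerSeries.map φ (SGaux.dZp s) = dZ (PowerSeries.map φ s) := by
    intro s
    refine PowerSeries.ext fun k => ?_
    rw [coeff_map, SGaux.coeff_dZp, dZ, coeff_mk, coeff_map, map_mul]
    have : φ ((k : Polynomial ℚ) + 1) = (k : ℚ) + 1 := by
      rw [map_add, map_natCast, map_one]
    rw [this, mul_comm]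
  have eT : PowerSeries.map φ T = 1 := by
    refine PowerSeries.ext fun k => ?_
    rcases k with _ | k <;>
      simp [coeff_map, hT, coeff_zero_C, coeff_succ_C, hφ, PowerSeries.coeff_one]
  have ekey := congrArg (PowerSeries.map φ) key
  simp only [map_mul, map_add, map_sub, map_one, PowerSeries.map_X, eDZ] at ekey
  have eCg : PowerSeries.map φ Cg = PowerSeries.map φ F := by
    conv_rhs => rw [heq, map_mul, eT, one_mul]
  rw [eCg] at ekey
  simp only [evalT1, ← hφ]
  linear_combination ekey
end

section
/- For n ≥ m ≥ 1 and a sequence j = (j_1, j_2, ...) of nonnegative integers with Σ j_k = m and Σ k·j_k = n, the quantity Σ over sequences i = (i_1, i_2, ...) with Σ i_ℓ = n−m+1 and Σ ℓ·i_ℓ = n of m!(n−m)! · Π_ℓ (1/i_ℓ!) · Π_k (k^{j_k}/j_k!) equals (m(n−1)!/(n−m+1)!) · Π_k (k^{j_k}/j_k!). Equivalently, Σ over such i of Π_ℓ (1/i_ℓ!) = (1/(n−m+1)!)·binomial(n−1, m−1). -/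
open Finset PowerSeries

private lemma multinomial_sum_eq (q n : ℕ) (hq : 1 ≤ q) (hqn : q ≤ n) :
    ∑ k ∈ (piAntidiag (Icc 1 n) q).filter
        (fun k : ℕ → ℕ => ∑ l ∈ Icc 1 n, l * k l = n),
      (Nat.multinomial (Icc 1 n) k : ℚ) = (n - 1).choose (q - 1) := by
  set P : ℚ⟦X⟧ := ∑ l ∈ Icc 1 n, (X : ℚ⟦X⟧) ^ l with hP
  set G : ℚ⟦X⟧ := X * (PowerSeries.mk 1 : ℚ⟦X⟧) with hG
  have hcoeff_low : ∀ a : ℕ, a ≤ n → coeff a G = coeff a P := by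
    intro a ha
    have hPc : coeff a P = if a ∈ Icc 1 n then 1 else 0 := by
      rw [hP, map_sum]
      simp only [coeff_X_pow]
      simp
    rw [hPc]
    match a with
    | 0 =>
      simp only [hG, coeff_zero_eq_constantCoeff, map_mul, constantCoeff_X, zero_mul]
      simp
    | Nat.succ b =>
      rw [hG, coeff_succ_X_mul, coeff_mk]
      have : b + 1 ∈ Icc 1 n := by simp; omega
      simp [this]
  have key : coeff n (P ^ q) = coeff n (G ^ q) := by
    obtain ⟨c, hc⟩ := sub_dvd_pow_sub_pow G P q
    have h0 : coeff n (G ^ q - P ^ q) = 0 := by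
      rw [hc, coeff_mul]
      refine Finset.sum_eq_zero fun p hp => ?_
      have hp1 : p.1 ≤ n := by
        have := Finset.HasAntidiagonal.mem_antidiagonal.mp hp; omega
      rw [map_sub, hcoeff_low p.1 hp1, sub_self, zero_mul]
    rw [map_sub] at h0
    linarith
  have hRHS : coeff n (G ^ q) = ((n - 1).choose (q - 1) : ℚ) := by
    obtain ⟨d, rfl⟩ : ∃ d, q = d + 1 := ⟨q - 1, by omega⟩
    rw [hG, mul_pow, mk_one_pow_eq_mk_choose_add, coeff_X_pow_mul', if_pos hqn, coeff_mk]
    have : d + (n - (d + 1)) = n - 1 := by omega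
    rw [this]
    simp
  have hLHS : coeff n (P ^ q) =
      ∑ k ∈ (piAntidiag (Icc 1 n) q).filter
        (fun k : ℕ → ℕ => ∑ l ∈ Icc 1 n, l * k l = n),
      (Nat.multinomial (Icc 1 n) k : ℚ) := by
    rw [hP, Finset.sum_pow_eq_sum_piAntidiag, map_sum, Finset.sum_filter]
    refine Finset.sum_congr rfl fun k hk => ?_
    have hprod : (∏ l ∈ Icc 1 n, ((X : ℚ⟦X⟧) ^ l) ^ k l)
        = (X : ℚ⟦X⟧) ^ (∑ l ∈ Icc 1 n, l * k l) := by
      simp_rw [← pow_mul]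
      rw [Finset.prod_pow_eq_pow_sum]
    rw [hprod, ← map_natCast (C (R := ℚ)) (Nat.multinomial (Icc 1 n) k), coeff_C_mul, coeff_X_pow]
    by_cases h : ∑ l ∈ Icc 1 n, l * k l = n
    · rw [if_pos h, if_pos h.symm, mul_one]
    · rw [if_neg h, if_neg fun hh => h hh.symm, mul_zero]
  rw [← hLHS, key, hRHS]

open Finsupp in
/-- For `n ≥ m ≥ 1` and a finitely supported sequence `j = (j_1, j_2, ...)` (we use
`j : ℕ →₀ ℕ` with `j 0 = 0`, so only indices `k ≥ 1` matter) with `Σ j_k = m` and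
`Σ k·j_k = n`, summing `m!(n−m)!·Π_ℓ 1/i_ℓ!·Π_k k^{j_k}/j_k!` over all finitely
supported `i` with `i 0 = 0`, `Σ i_ℓ = n−m+1`, `Σ ℓ·i_ℓ = n` gives
`(m(n−1)!/(n−m+1)!)·Π_k k^{j_k}/j_k!`; equivalently, the sum of `Π_ℓ 1/i_ℓ!` over
such `i` equals `binomial(n−1, m−1)/(n−m+1)!`. -/
theorem meandric_count_sum_i (n m : ℕ) (hm : 1 ≤ m) (hmn : m ≤ n)
    (j : ℕ →₀ ℕ) (hj0 : j 0 = 0)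
    (hjm : ∑ k ∈ j.support, j k = m) (hjn : ∑ k ∈ j.support, k * j k = n) :
    (∑ᶠ i : {i : ℕ →₀ ℕ // i 0 = 0 ∧
        (∑ l ∈ i.support, i l) = n - m + 1 ∧ (∑ l ∈ i.support, l * i l) = n},
      ((m.factorial * (n - m).factorial : ℚ) *
        (∏ l ∈ i.1.support, 1 / ((i.1 l).factorial : ℚ)) *
        ∏ k ∈ j.support, (k : ℚ) ^ (j k) / ((j k).factorial : ℚ)))
      = ((m : ℚ) * (n - 1).factorial / ((n - m + 1).factorial : ℚ)) *
        ∏ k ∈ j.support, (k : ℚ) ^ (j k) / ((j k).factorial : ℚ) ∧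
    (∑ᶠ i : {i : ℕ →₀ ℕ // i 0 = 0 ∧
        (∑ l ∈ i.support, i l) = n - m + 1 ∧ (∑ l ∈ i.support, l * i l) = n},
      ∏ l ∈ i.1.support, 1 / ((i.1 l).factorial : ℚ))
      = (Nat.choose (n - 1) (m - 1) : ℚ) / ((n - m + 1).factorial : ℚ) := by
  set q : ℕ := n - m + 1 with hqdef
  have hq1 : 1 ≤ q := by omega
  have hqn : q ≤ n := by omega
  set p : (ℕ →₀ ℕ) → Prop := fun i => i 0 = 0 ∧
      (∑ l ∈ i.support, i l) = q ∧ (∑ l ∈ i.support, l * i l) = n with hpdef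
  set F : Finset (ℕ →₀ ℕ) := (finsuppAntidiag (Icc 1 n) q).filter
      (fun i => ∑ l ∈ i.support, l * i l = n) with hFdef
  -- support of members of F is inside Icc 1 n, and membership characterization
  have hmem : ∀ i : ℕ →₀ ℕ, p i ↔ i ∈ F := by
    intro i
    rw [hFdef, mem_filter, mem_finsuppAntidiag]
    constructor
    · rintro ⟨h0, hs, hn'⟩
      have hsub : i.support ⊆ Icc 1 n := by
        intro l hl
        have hl' : i l ≠ 0 := Finsupp.mem_support_iff.mp hl
        have hl0 : l ≠ 0 := by rintro rfl; exact hl' h0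
        have h1 : l * 1 ≤ l * i l := Nat.mul_le_mul_left l (by omega)
        have h2 : l * i l ≤ ∑ l' ∈ i.support, l' * i l' :=
          Finset.single_le_sum (f := fun l' => l' * i l') (fun _ _ => Nat.zero_le _) hl
        rw [mem_Icc]
        omega
      have hsum : ∑ l ∈ Icc 1 n, i l = ∑ l ∈ i.support, i l :=
        (Finset.sum_subset hsub (fun x _ hx => by
          simpa [Finsupp.mem_support_iff] using hx)).symm
      exact ⟨⟨by rw [hsum, hs], hsub⟩, hn'⟩
    · rintro ⟨⟨hs, hsub⟩, hn'⟩
      have h0 : i 0 = 0 := by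
        by_contra h
        have : (0 : ℕ) ∈ i.support := Finsupp.mem_support_iff.mpr h
        have := hsub this
        simp [mem_Icc] at this
      have hsum : ∑ l ∈ Icc 1 n, i l = ∑ l ∈ i.support, i l :=
        (Finset.sum_subset hsub (fun x _ hx => by
          simpa [Finsupp.mem_support_iff] using hx)).symm
      exact ⟨h0, by rw [← hsum, hs], hn'⟩
  -- convert finsum over the subtype to a Finset sum over F
  have hconv : ∀ g : (ℕ →₀ ℕ) → ℚ,
      (∑ᶠ i : {i : ℕ →₀ ℕ // p i}, g i.1) = ∑ i ∈ F, g i := by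
    intro g
    have h1 : (∑ᶠ i : {i : ℕ →₀ ℕ // p i}, g i.1) = ∑ᶠ i ∈ {x | p x}, g i :=
      finsum_set_coe_eq_finsum_mem {x | p x}
    have hset : {x : ℕ →₀ ℕ | p x} = ↑F := Set.ext fun i => by
      simpa using hmem i
    rw [h1, hset, finsum_mem_coe_finset]
  -- the multinomial sum over F
  have hmulti : ∑ i ∈ F, (Nat.multinomial (Icc 1 n) ⇑i : ℚ)
      = ((n - 1).choose (q - 1) : ℚ) := by
    rw [← multinomial_sum_eq q n hq1 hqn]
    refine Finset.sum_bij (fun i _ => ⇑i) ?_ ?_ ?_ ?_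
    · intro i hi
      rw [hFdef, mem_filter, mem_finsuppAntidiag] at hi
      obtain ⟨⟨hs, hsub⟩, hn'⟩ := hi
      rw [mem_filter, mem_piAntidiag]
      refine ⟨⟨hs, fun l hl => hsub (Finsupp.mem_support_iff.mpr hl)⟩, ?_⟩
      show ∑ l ∈ Icc 1 n, l * i l = n
      rw [← Finset.sum_subset hsub (fun x _ hx => by
        simp only [Finsupp.mem_support_iff, not_not] at hx
        simp [hx])]
      exact hn'
    · intro i _ i' _ h
      exact DFunLike.coe_injective h
    · intro k hk
      rw [mem_filter, mem_piAntidiag] at hk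
      obtain ⟨⟨hs, hsupp⟩, hn'⟩ := hk
      refine ⟨⟨(Icc 1 n).filter (fun l => k l ≠ 0), k, fun l => ?_⟩, ?_, rfl⟩
      · simp only [mem_filter, mem_Icc]
        constructor
        · rintro ⟨_, h⟩; exact h
        · intro h
          have := hsupp l h
          rw [mem_Icc] at this
          exact ⟨⟨this.1, this.2⟩, h⟩
      · set i : ℕ →₀ ℕ := ⟨(Icc 1 n).filter (fun l => k l ≠ 0), k, by
          intro l
          simp only [mem_filter, mem_Icc]
          constructor
          · rintro ⟨_, h⟩; exact h
          · intro h
            have := hsupp l h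
            rw [mem_Icc] at this
            exact ⟨⟨this.1, this.2⟩, h⟩⟩ with hidef
        rw [← hmem i]
        have hcoe : ⇑i = k := rfl
        have hsupport : i.support = (Icc 1 n).filter (fun l => k l ≠ 0) := rfl
        refine ⟨?_, ?_, ?_⟩
        · show k 0 = 0
          by_contra h
          have := hsupp 0 h
          simp [mem_Icc] at this
        · show ∑ l ∈ i.support, k l = q
          rw [hsupport, Finset.sum_filter_ne_zero, hs]
        · show ∑ l ∈ i.support, l * k l = n
          rw [hsupport]
          rw [Finset.sum_subset (Finset.filter_subset _ (Icc 1 n)) (fun x hx hx' => by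
            simp only [mem_filter, not_and, not_not] at hx'
            rw [hx' hx, mul_zero])]
          exact hn'
    · intro i hi
      rfl
  -- per-term: multinomial = q! * ∏ 1/(i l)!
  have hterm : ∀ i ∈ F, (Nat.multinomial (Icc 1 n) ⇑i : ℚ)
      = (q.factorial : ℚ) * ∏ l ∈ i.support, 1 / ((i l).factorial : ℚ) := by
    intro i hi
    rw [hFdef, mem_filter, mem_finsuppAntidiag] at hi
    obtain ⟨⟨hs, hsub⟩, _⟩ := hi
    have spec := Nat.multinomial_spec (Icc 1 n) ⇑i
    rw [hs] at spec
    have hprodeq : ∏ l ∈ Icc 1 n, (i l).factorial = ∏ l ∈ i.support, (i l).factorial :=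
      (Finset.prod_subset hsub (fun x _ hx => by
        simp only [Finsupp.mem_support_iff, not_not] at hx
        simp [hx])).symm
    rw [hprodeq] at spec
    have specQ : ((∏ l ∈ i.support, (i l).factorial : ℕ) : ℚ) *
        (Nat.multinomial (Icc 1 n) ⇑i : ℚ) = (q.factorial : ℚ) := by
      rw [← Nat.cast_mul, spec]
    push_cast at specQ
    have h1 : (∏ l ∈ i.support, 1 / ((i l).factorial : ℚ)) *
        ∏ l ∈ i.support, ((i l).factorial : ℚ) = 1 := by
      rw [← Finset.prod_mul_distrib]
      refine Finset.prod_eq_one fun l _ => ?_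
      rw [one_div_mul_cancel]
      exact_mod_cast (Nat.factorial_pos _).ne'
    have h2 : (q.factorial : ℚ) * ∏ l ∈ i.support, 1 / ((i l).factorial : ℚ)
        = (Nat.multinomial (Icc 1 n) ⇑i : ℚ) := by
      calc (q.factorial : ℚ) * ∏ l ∈ i.support, 1 / ((i l).factorial : ℚ)
          = ((∏ l ∈ i.support, ((i l).factorial : ℚ)) *
              (Nat.multinomial (Icc 1 n) ⇑i : ℚ)) *
            ∏ l ∈ i.support, 1 / ((i l).factorial : ℚ) := by rw [specQ]
        _ = (Nat.multinomial (Icc 1 n) ⇑i : ℚ) *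
            ((∏ l ∈ i.support, 1 / ((i l).factorial : ℚ)) *
              ∏ l ∈ i.support, ((i l).factorial : ℚ)) := by ring
        _ = (Nat.multinomial (Icc 1 n) ⇑i : ℚ) := by rw [h1, mul_one]
    exact h2.symm
  -- second conjunct
  have hchoose : (n - 1).choose (q - 1) = (n - 1).choose (m - 1) := by
    have h1 : q - 1 = (n - 1) - (m - 1) := by omega
    rw [h1, Nat.choose_symm (by omega)]
  have hsecond : (∑ᶠ i : {i : ℕ →₀ ℕ // p i},
      ∏ l ∈ i.1.support, 1 / ((i.1 l).factorial : ℚ))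
      = (Nat.choose (n - 1) (m - 1) : ℚ) / (q.factorial : ℚ) := by
    rw [hconv (fun i => ∏ l ∈ i.support, 1 / ((i l).factorial : ℚ))]
    have : ∑ i ∈ F, ∏ l ∈ i.support, 1 / ((i l).factorial : ℚ)
        = ∑ i ∈ F, (Nat.multinomial (Icc 1 n) ⇑i : ℚ) / (q.factorial : ℚ) := by
      refine Finset.sum_congr rfl fun i hi => ?_
      rw [hterm i hi, mul_comm, mul_div_assoc, div_self, mul_one]
      exact_mod_cast (Nat.factorial_pos q).ne'
    rw [this, ← Finset.sum_div, hmulti, hchoose]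
  refine ⟨?_, hsecond⟩
  -- first conjunct
  have hnum : (m.factorial * (n - m).factorial : ℚ) * ((n - 1).choose (m - 1) : ℚ)
      = (m : ℚ) * ((n - 1).factorial : ℚ) := by
    have h := Nat.choose_mul_factorial_mul_factorial (show m - 1 ≤ n - 1 by omega)
    have h2 : (n - 1) - (m - 1) = n - m := by omega
    rw [h2] at h
    have hm' : m.factorial = m * (m - 1).factorial := by
      conv_lhs => rw [show m = (m - 1) + 1 by omega]
      rw [Nat.factorial_succ]
      congr 1
      omega
    calc (m.factorial * (n - m).factorial : ℚ) * ((n - 1).choose (m - 1) : ℚ)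
        = (m : ℚ) * (((n - 1).choose (m - 1) * (m - 1).factorial * (n - m).factorial : ℕ) : ℚ) := by
          push_cast [hm']; ring
      _ = (m : ℚ) * ((n - 1).factorial : ℚ) := by rw [h]
  rw [hconv (fun i => ((m.factorial * (n - m).factorial : ℚ) *
        (∏ l ∈ i.support, 1 / ((i l).factorial : ℚ)) *
        ∏ k ∈ j.support, (k : ℚ) ^ (j k) / ((j k).factorial : ℚ)))]
  have : ∑ i ∈ F, ((m.factorial * (n - m).factorial : ℚ) *
        (∏ l ∈ i.support, 1 / ((i l).factorial : ℚ)) *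
        ∏ k ∈ j.support, (k : ℚ) ^ (j k) / ((j k).factorial : ℚ))
      = ((m.factorial * (n - m).factorial : ℚ) *
        ∑ i ∈ F, ∏ l ∈ i.support, 1 / ((i l).factorial : ℚ)) *
        ∏ k ∈ j.support, (k : ℚ) ^ (j k) / ((j k).factorial : ℚ) := by
    rw [Finset.mul_sum, Finset.sum_mul]
  rw [this]
  have hFsum : ∑ i ∈ F, ∏ l ∈ i.support, 1 / ((i l).factorial : ℚ)
      = (Nat.choose (n - 1) (m - 1) : ℚ) / (q.factorial : ℚ) := by
    rw [← hsecond, hconv (fun i => ∏ l ∈ i.support, 1 / ((i l).factorial : ℚ))]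
  rw [hFsum]
  congr 1
  rw [mul_div_assoc', hnum, mul_div_assoc]
end

section
/- For n ≥ m ≥ 1, the sum over finitely supported sequences (j_1, j_2, ...) of nonnegative integers with Σ_k j_k = m and Σ_k k·j_k = n of Π_k (k^{j_k}/j_k!) equals (1/m!)·binomial(n+m−1, n−m); consequently Σ_j (m(n−1)!/(n−m+1)!)·Π_k (k^{j_k}/j_k!) = (1/n)·binomial(n, m−1)·binomial(n+m−1, n−m). -/
open Finsupp Finset PowerSeries

namespace MeandricAux

/-- One factor of the summand. -/
noncomputable def fQ (j : ℕ →₀ ℕ) (r : ℕ) : ℚ := (r : ℚ) ^ (j r) / ((j r).factorial : ℚ)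

/-- The summand. -/
noncomputable def piQ (j : ℕ →₀ ℕ) : ℚ := ∏ k ∈ j.support, fQ j k

lemma piQ_def (j : ℕ →₀ ℕ) :
    piQ j = ∏ k ∈ j.support, (k : ℚ) ^ (j k) / ((j k).factorial : ℚ) := rfl

/-- The predicate on `j`. -/
def Pred (n m : ℕ) (j : ℕ →₀ ℕ) : Prop :=
  j 0 = 0 ∧ (∑ k ∈ j.support, j k) = m ∧ (∑ k ∈ j.support, k * j k) = n

instance (n m : ℕ) : DecidablePred (Pred n m) := fun _ => by unfold Pred; infer_instance

/-- The finset of admissible `j`. -/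
noncomputable def Pset (n m : ℕ) : Finset (ℕ →₀ ℕ) :=
  (Finset.finsuppAntidiag (Finset.range (n + 1)) m).filter (Pred n m)

lemma mem_Pset {n m : ℕ} {j : ℕ →₀ ℕ} : j ∈ Pset n m ↔ Pred n m j := by
  constructor
  · exact fun h => (Finset.mem_filter.1 h).2
  · intro h
    have hsub : j.support ⊆ Finset.range (n + 1) := by
      intro k hk
      have hk1 : 1 ≤ j k := Nat.one_le_iff_ne_zero.2 (Finsupp.mem_support_iff.1 hk)
      have h2 : k * j k ≤ n := h.2.2 ▸
        Finset.single_le_sum (f := fun r => r * j r) (fun _ _ => Nat.zero_le _) hk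
      exact Finset.mem_range.2 (Nat.lt_succ_of_le
        (le_trans (Nat.le_mul_of_pos_right k hk1) h2))
    refine Finset.mem_filter.2 ⟨Finset.mem_finsuppAntidiag.2 ⟨?_, hsub⟩, h⟩
    rw [← Finset.sum_subset hsub (fun x _ hx => Finsupp.notMem_support_iff.1 hx)]
    exact h.2.1

noncomputable def F (n m : ℕ) : ℚ := ∑ j ∈ Pset n m, piQ j

lemma pred_iff {n m : ℕ} {j : ℕ →₀ ℕ} : Pred n m j ↔
    j 0 = 0 ∧ j.sum (fun _ x => x) = m ∧ j.sum (fun k x => k * x) = n := Iff.rfl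

lemma sum_id_add (j : ℕ →₀ ℕ) (a : ℕ) :
    (j + Finsupp.single a 1).sum (fun _ x => x) = j.sum (fun _ x => x) + 1 := by
  rw [Finsupp.sum_add_index' (fun _ => rfl) (fun _ _ _ => rfl),
    Finsupp.sum_single_index rfl]

lemma sum_mul_add (j : ℕ →₀ ℕ) (a : ℕ) :
    (j + Finsupp.single a 1).sum (fun k x => k * x) = j.sum (fun k x => k * x) + a := by
  rw [Finsupp.sum_add_index' (fun k => Nat.mul_zero k) (fun k x y => Nat.mul_add k x y),
    Finsupp.sum_single_index (Nat.mul_zero a), Nat.mul_one]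

lemma sub_single_add {j : ℕ →₀ ℕ} {k : ℕ} (hk : k ∈ j.support) :
    (j - Finsupp.single k 1) + Finsupp.single k 1 = j :=
  tsub_add_cancel_of_le (Finsupp.single_le_iff.2
    (Nat.one_le_iff_ne_zero.2 (Finsupp.mem_support_iff.1 hk)))

lemma piQ_term {j : ℕ →₀ ℕ} {k : ℕ} (hk : k ∈ j.support) :
    (j k : ℚ) * piQ j = (k : ℚ) * piQ (j - Finsupp.single k 1) := by
  obtain ⟨t, ht⟩ : ∃ t, j k = t + 1 :=
    ⟨j k - 1, (Nat.succ_pred_eq_of_pos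
      (Nat.pos_of_ne_zero (Finsupp.mem_support_iff.1 hk))).symm⟩
  set j' := j - Finsupp.single k 1 with hj'
  have happ : ∀ r, r ≠ k → j' r = j r := fun r hr => by
    rw [hj', Finsupp.tsub_apply, Finsupp.single_eq_of_ne hr, Nat.sub_zero]
  have hk' : j' k = t := by
    rw [hj', Finsupp.tsub_apply, Finsupp.single_eq_same, ht, Nat.add_sub_cancel]
  have hprod : ∏ r ∈ j.support.erase k, fQ j' r = ∏ r ∈ j.support.erase k, fQ j r :=
    Finset.prod_congr rfl (fun r hr => by
      unfold fQ; rw [happ r (Finset.ne_of_mem_erase hr)])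
  have hπ : piQ j = fQ j k * ∏ r ∈ j.support.erase k, fQ j r :=
    (Finset.mul_prod_erase _ _ hk).symm
  have hπ' : piQ j' = ((k : ℚ) ^ t / (t.factorial : ℚ)) * ∏ r ∈ j.support.erase k, fQ j r := by
    by_cases ht0 : t = 0
    · have hsupp : j'.support = j.support.erase k := by
        ext r
        by_cases hr : r = k
        · simp [hr, Finsupp.mem_support_iff, hk', ht0]
        · simp [Finset.mem_erase, hr, Finsupp.mem_support_iff, happ r hr]
      rw [piQ, hsupp, ht0]
      simp only [pow_zero, Nat.factorial_zero, Nat.cast_one, div_one, one_mul]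
      exact hprod
    · have hk'' : k ∈ j'.support := Finsupp.mem_support_iff.2 (by rw [hk']; exact ht0)
      have herase : j'.support.erase k = j.support.erase k := by
        ext r
        by_cases hr : r = k
        · simp [hr]
        · simp [Finset.mem_erase, hr, Finsupp.mem_support_iff, happ r hr]
      rw [piQ, ← Finset.mul_prod_erase _ _ hk'', herase, hprod]
      unfold fQ
      rw [hk']
  rw [hπ, hπ', ht]
  unfold fQ
  rw [ht]
  have hfac : (((t + 1).factorial : ℕ) : ℚ) = (t + 1) * (t.factorial : ℚ) := by
    exact_mod_cast Nat.factorial_succ t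
  have h1 : (t.factorial : ℚ) ≠ 0 := Nat.cast_ne_zero.2 (Nat.factorial_ne_zero t)
  have h2 : ((t : ℚ) + 1) ≠ 0 := by positivity
  field_simp [hfac]
  rw [hfac]; push_cast; ring

lemma pred_bounds {n m : ℕ} {j : ℕ →₀ ℕ} (hj : Pred n m j) {k : ℕ} (hk : k ∈ j.support) :
    k ≠ 0 ∧ k ≤ n := by
  have hk1 : 1 ≤ j k := Nat.one_le_iff_ne_zero.2 (Finsupp.mem_support_iff.1 hk)
  constructor
  · intro h0
    rw [h0] at hk
    exact Finsupp.mem_support_iff.1 hk hj.1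
  · have h2 : k * j k ≤ n := hj.2.2 ▸
      Finset.single_le_sum (f := fun r => r * j r) (fun _ _ => Nat.zero_le _) hk
    exact le_trans (Nat.le_mul_of_pos_right k hk1) h2

lemma F_rec (n m : ℕ) :
    ((m : ℚ) + 1) * F n (m + 1) = ∑ p ∈ Finset.HasAntidiagonal.antidiagonal n, (p.1 : ℚ) * F p.2 m := by
  classical
  rw [F, Finset.mul_sum]
  have hL : ∀ j ∈ Pset n (m + 1), ((m : ℚ) + 1) * piQ j
      = ∑ k ∈ j.support, (j k : ℚ) * piQ j := by
    intro j hj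
    rw [← Finset.sum_mul]
    congr 1
    have h := (mem_Pset.1 hj).2.1
    have : ((∑ k ∈ j.support, j k : ℕ) : ℚ) = ((m + 1 : ℕ) : ℚ) := by rw [h]
    push_cast at this
    linarith [this]
  rw [Finset.sum_congr rfl hL, Finset.sum_sigma']
  have hR : ∀ p ∈ Finset.HasAntidiagonal.antidiagonal n, (p.1 : ℚ) * F p.2 m
      = ∑ j ∈ Pset p.2 m, (p.1 : ℚ) * piQ j := by
    intro p _
    rw [F, Finset.mul_sum]
  rw [Finset.sum_congr rfl hR,
    ← Finset.sum_filter_of_ne (p := fun p : ℕ × ℕ => p.1 ≠ 0)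
      (fun p _ hp h0 => by simp [h0] at hp),
    Finset.sum_sigma']
  refine Finset.sum_nbij'
    (i := fun q => ⟨(q.2, n - q.2), q.1 - Finsupp.single q.2 1⟩)
    (j := fun q => ⟨q.2 + Finsupp.single q.1.1 1, q.1.1⟩) ?_ ?_ ?_ ?_ ?_
  · rintro ⟨j, k⟩ hq
    dsimp only at hq ⊢
    obtain ⟨hj, hk⟩ := Finset.mem_sigma.1 hq
    dsimp only at hj hk
    have hpred := mem_Pset.1 hj
    obtain ⟨hk0, hkn⟩ := pred_bounds hpred hk
    have e := sub_single_add hk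
    set j' := j - Finsupp.single k 1 with hj'
    refine Finset.mem_sigma.2 ⟨Finset.mem_filter.2 ⟨?_, hk0⟩, mem_Pset.2 ?_⟩
    · exact Finset.HasAntidiagonal.mem_antidiagonal.2 (by dsimp only; omega)
    · rw [pred_iff] at hpred ⊢
      have h1 : j.sum (fun _ x => x) = j'.sum (fun _ x => x) + 1 := by
        conv_lhs => rw [← e]
        exact sum_id_add j' k
      have h2 : j.sum (fun k x => k * x) = j'.sum (fun k x => k * x) + k := by
        conv_lhs => rw [← e]
        exact sum_mul_add j' k
      refine ⟨?_, by dsimp only; omega, by dsimp only; omega⟩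
      have h0 : j' 0 = 0 := by
        rw [hj', Finsupp.tsub_apply, hpred.1, Nat.zero_sub]
      exact h0
  · rintro ⟨⟨a, b⟩, j'⟩ hq
    dsimp only at hq ⊢
    obtain ⟨hab, hj'⟩ := Finset.mem_sigma.1 hq
    dsimp only at hab hj'
    obtain ⟨hab, ha0⟩ := Finset.mem_filter.1 hab
    dsimp only at hab ha0
    have hab := Finset.HasAntidiagonal.mem_antidiagonal.1 hab
    dsimp only at hab
    have hpred := mem_Pset.1 hj'
    rw [pred_iff] at hpred
    refine Finset.mem_sigma.2 ⟨mem_Pset.2 ?_, ?_⟩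
    · rw [pred_iff]
      refine ⟨?_, ?_, ?_⟩
      · simp [Finsupp.single_eq_of_ne' ha0, hpred.1]
      · rw [sum_id_add, hpred.2.1]
      · rw [sum_mul_add, hpred.2.2]; omega
    · simp only [Finsupp.mem_support_iff, Finsupp.add_apply, Finsupp.single_eq_same]
      omega
  · rintro ⟨j, k⟩ hq
    dsimp only at hq ⊢
    obtain ⟨hj, hk⟩ := Finset.mem_sigma.1 hq
    dsimp only at hj hk
    exact Sigma.ext (sub_single_add hk) (heq_of_eq rfl)
  · rintro ⟨⟨a, b⟩, j'⟩ hq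
    dsimp only at hq ⊢
    obtain ⟨hab, hj'⟩ := Finset.mem_sigma.1 hq
    dsimp only at hab hj'
    obtain ⟨hab, ha0⟩ := Finset.mem_filter.1 hab
    dsimp only at hab ha0
    have hab := Finset.HasAntidiagonal.mem_antidiagonal.1 hab
    dsimp only at hab
    refine Sigma.ext ?_ (heq_of_eq (add_tsub_cancel_right _ _))
    exact Prod.ext rfl (by dsimp only; omega)
  · rintro ⟨j, k⟩ hq
    dsimp only at hq ⊢
    obtain ⟨hj, hk⟩ := Finset.mem_sigma.1 hq
    dsimp only at hj hk
    exact piQ_term hk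

noncomputable def phi : PowerSeries ℚ := PowerSeries.mk fun k => (k : ℚ)

noncomputable def c (n m : ℕ) : ℚ := PowerSeries.coeff n (phi ^ m)

lemma coeff_phi (a : ℕ) : PowerSeries.coeff a phi = a := coeff_mk _ _

lemma c_zero (n : ℕ) : c n 0 = if n = 0 then 1 else 0 := by
  rw [c, pow_zero, PowerSeries.coeff_one]

lemma c_succ (n m : ℕ) : c n (m + 1) = ∑ p ∈ Finset.HasAntidiagonal.antidiagonal n, (p.1 : ℚ) * c p.2 m := by
  rw [c, pow_succ', PowerSeries.coeff_mul]
  exact Finset.sum_congr rfl fun p _ => by rw [coeff_phi]; rfl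

lemma F_zero (n : ℕ) : F n 0 = if n = 0 then 1 else 0 := by
  have hset : Pset n 0 = if n = 0 then {0} else ∅ := by
    ext j
    rw [mem_Pset]
    constructor
    · rintro ⟨h0, hs, hw⟩
      have hj : j = 0 := by
        ext r
        by_cases hr : r ∈ j.support
        · simpa using (Finset.sum_eq_zero_iff.1 hs) r hr
        · simpa using Finsupp.notMem_support_iff.1 hr
      subst hj
      have hn : n = 0 := by simpa using hw.symm
      simp [hn]
    · intro hj
      by_cases hn : n = 0
      · subst hn
        rw [if_pos rfl, Finset.mem_singleton] at hj
        subst hj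
        refine ⟨rfl, by simp, by simp⟩
      · rw [if_neg hn] at hj
        exact absurd hj (Finset.notMem_empty j)
  rw [F, hset]
  by_cases hn : n = 0 <;> simp [hn, piQ]

lemma F_eq_c (n m : ℕ) : (m.factorial : ℚ) * F n m = c n m := by
  induction m generalizing n with
  | zero => rw [F_zero, c_zero]; simp
  | succ m ih =>
    have h1 : ((m + 1).factorial : ℚ) * F n (m + 1)
        = (m.factorial : ℚ) * (((m : ℚ) + 1) * F n (m + 1)) := by
      rw [Nat.factorial_succ]
      push_cast
      ring
    rw [h1, F_rec, Finset.mul_sum, c_succ]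
    exact Finset.sum_congr rfl fun p _ => by rw [← ih p.2]; ring

lemma c_eq (n m : ℕ) (hm : 1 ≤ m) (hmn : m ≤ n) :
    c n m = (Nat.choose (n + m - 1) (n - m) : ℚ) := by
  have hphi : phi = PowerSeries.X * (invOneSubPow ℚ 2).val := by
    ext a
    cases a with
    | zero => simp [phi]
    | succ a =>
      rw [phi, coeff_mk, PowerSeries.coeff_succ_X_mul,
        invOneSubPow_val_succ_eq_mk_add_choose, coeff_mk, Nat.choose_one_right]
      push_cast
      ring
  have hunits : (invOneSubPow ℚ 2) ^ m = invOneSubPow ℚ (2 * m) := by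
    rw [invOneSubPow_eq_inv_one_sub_pow, invOneSubPow_eq_inv_one_sub_pow, ← pow_mul]
  have hpow : phi ^ m = PowerSeries.X ^ m * ((invOneSubPow ℚ (2 * m)).val) := by
    rw [hphi, mul_pow, ← Units.val_pow_eq_pow_val, hunits]
  rw [c, hpow]
  obtain ⟨d, rfl⟩ : ∃ d, n = d + m := ⟨n - m, by omega⟩
  rw [PowerSeries.coeff_X_pow_mul]
  have h2m : 2 * m = (2 * m - 1) + 1 := by omega
  rw [h2m, invOneSubPow_val_succ_eq_mk_add_choose, coeff_mk]
  congr 1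
  have h1 : d + m + m - 1 = 2 * m - 1 + d := by omega
  have h2 : d + m - m = d := by omega
  rw [h1, h2]
  have h4 := Nat.choose_symm (show 2 * m - 1 ≤ 2 * m - 1 + d by omega)
  rw [show 2 * m - 1 + d - (2 * m - 1) = d from by omega] at h4
  exact h4.symm

lemma F_val (n m : ℕ) (hm : 1 ≤ m) (hmn : m ≤ n) :
    F n m = (1 / (m.factorial : ℚ)) * (Nat.choose (n + m - 1) (n - m) : ℚ) := by
  have h := F_eq_c n m
  rw [c_eq n m hm hmn] at h
  have hf : (m.factorial : ℚ) ≠ 0 := Nat.cast_ne_zero.2 (Nat.factorial_ne_zero m)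
  field_simp
  linarith [h]

lemma finsum_eq (n m : ℕ) (g : (ℕ →₀ ℕ) → ℚ) :
    (∑ᶠ j : {j : ℕ →₀ ℕ // j 0 = 0 ∧
        (∑ k ∈ j.support, j k) = m ∧ (∑ k ∈ j.support, k * j k) = n}, g j.1)
      = ∑ j ∈ Pset n m, g j := by
  rw [finsum_subtype_eq_finsum_cond]
  have hP : (fun j : ℕ →₀ ℕ => j 0 = 0 ∧
        (∑ k ∈ j.support, j k) = m ∧ (∑ k ∈ j.support, k * j k) = n)
      = (fun j => j ∈ ((Pset n m : Finset (ℕ →₀ ℕ)) : Set (ℕ →₀ ℕ))) := by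
    funext j
    exact propext (by rw [Finset.mem_coe, mem_Pset]; exact Iff.rfl)
  calc (∑ᶠ (j : ℕ →₀ ℕ) (_ : j 0 = 0 ∧
        (∑ k ∈ j.support, j k) = m ∧ (∑ k ∈ j.support, k * j k) = n), g j)
      = ∑ᶠ j ∈ ((Pset n m : Finset (ℕ →₀ ℕ)) : Set (ℕ →₀ ℕ)), g j :=
        finsum_congr fun j => by rw [congrFun hP j]
    _ = ∑ j ∈ Pset n m, g j := finsum_mem_coe_finset _ _

end MeandricAux

open MeandricAux in
open Finsupp in
/-- For `n ≥ m ≥ 1`, the sum over finitely supported sequences `j = (j_1, j_2, ...)`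
(modeled as `j : ℕ →₀ ℕ` with `j 0 = 0`) with `Σ j_k = m` and `Σ k·j_k = n` of
`Π_k k^{j_k}/j_k!` equals `(1/m!)·binomial(n+m−1, n−m)`; consequently the sum of
`(m(n−1)!/(n−m+1)!)·Π_k k^{j_k}/j_k!` equals
`(1/n)·binomial(n, m−1)·binomial(n+m−1, n−m)`. -/
theorem meandric_count_sum_j (n m : ℕ) (hm : 1 ≤ m) (hmn : m ≤ n) :
    (∑ᶠ j : {j : ℕ →₀ ℕ // j 0 = 0 ∧
        (∑ k ∈ j.support, j k) = m ∧ (∑ k ∈ j.support, k * j k) = n},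
      ∏ k ∈ j.1.support, (k : ℚ) ^ (j.1 k) / ((j.1 k).factorial : ℚ))
      = (1 / (m.factorial : ℚ)) * (Nat.choose (n + m - 1) (n - m) : ℚ) ∧
    (∑ᶠ j : {j : ℕ →₀ ℕ // j 0 = 0 ∧
        (∑ k ∈ j.support, j k) = m ∧ (∑ k ∈ j.support, k * j k) = n},
      ((m : ℚ) * ((n - 1).factorial : ℚ) / (((n - m + 1).factorial : ℚ))) *
        ∏ k ∈ j.1.support, (k : ℚ) ^ (j.1 k) / ((j.1 k).factorial : ℚ))
      = (1 / (n : ℚ)) * (Nat.choose n (m - 1) : ℚ) *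
          (Nat.choose (n + m - 1) (n - m) : ℚ) := by
  set C : ℚ := ((m : ℚ) * ((n - 1).factorial : ℚ) / (((n - m + 1).factorial : ℚ))) with hC
  have h1 : (∑ᶠ j : {j : ℕ →₀ ℕ // j 0 = 0 ∧
        (∑ k ∈ j.support, j k) = m ∧ (∑ k ∈ j.support, k * j k) = n},
      ∏ k ∈ j.1.support, (k : ℚ) ^ (j.1 k) / ((j.1 k).factorial : ℚ)) = F n m := by
    rw [F]
    simpa only [piQ_def] using finsum_eq n m piQ
  have h2 : (∑ᶠ j : {j : ℕ →₀ ℕ // j 0 = 0 ∧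
        (∑ k ∈ j.support, j k) = m ∧ (∑ k ∈ j.support, k * j k) = n},
      C * ∏ k ∈ j.1.support, (k : ℚ) ^ (j.1 k) / ((j.1 k).factorial : ℚ))
      = C * F n m := by
    rw [F, Finset.mul_sum]
    simpa only [piQ_def] using finsum_eq n m (fun j => C * piQ j)
  have hF := F_val n m hm hmn
  constructor
  · rw [h1, hF]
  · rw [h2, hF]
    -- arithmetic
    have hn1 : (1 : ℕ) ≤ n := le_trans hm hmn
    have hcast : ((Nat.choose n (m - 1) : ℕ) : ℚ)
        = (n.factorial : ℚ) / (((m - 1).factorial : ℚ) * ((n - m + 1).factorial : ℚ)) := by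
      have h := Nat.cast_choose ℚ (show m - 1 ≤ n by omega)
      rw [show n - (m - 1) = n - m + 1 from by omega] at h
      exact h
    have hnf : (n.factorial : ℚ) = (n : ℚ) * ((n - 1).factorial : ℚ) := by
      rw [show n = (n - 1) + 1 from by omega, Nat.factorial_succ]
      push_cast
      ring_nf
    have hmf : (m.factorial : ℚ) = (m : ℚ) * ((m - 1).factorial : ℚ) := by
      rw [show m = (m - 1) + 1 from by omega, Nat.factorial_succ]
      push_cast
      ring_nf
    have hne1 : ((n : ℚ)) ≠ 0 := Nat.cast_ne_zero.2 (by omega)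
    have hne2 : ((m : ℚ)) ≠ 0 := Nat.cast_ne_zero.2 (by omega)
    have hne3 : (((m - 1).factorial : ℕ) : ℚ) ≠ 0 := Nat.cast_ne_zero.2 (Nat.factorial_ne_zero _)
    have hne4 : (((n - m + 1).factorial : ℕ) : ℚ) ≠ 0 := Nat.cast_ne_zero.2 (Nat.factorial_ne_zero _)
    have hne5 : ((m.factorial : ℕ) : ℚ) ≠ 0 := Nat.cast_ne_zero.2 (Nat.factorial_ne_zero _)
    rw [hC, hcast, hnf, hmf]
    field_simp
end
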